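/- Let K be a field of characteristic ≠ 2, and let x₁, x₂, x₃, x₄ ∈ K satisfy x₁² - 2x₂² + x₃² = 0 and x₂² - 2x₃² + x₄² = 0 with s = x₁ + 3x₂ + 3x₃ + x₄ ≠ 0. Then X = 2(x₁ - 3x₂ - 3x₃ + x₄)/s and Y = 6(x₁ - x₂ + x₃ - x₄)/s satisfy Y² = X³ + 5X² + 4X. -/

import Mathlib

theorem four_squares_to_elliptic (K : Type*) [Field K] (h2 : (2 : K) ≠ 0)
    (x₁ x₂ x₃ x₄ : K)
    (h₁ : x₁ ^ 2 - 2 * x₂ ^ 2 + x₃ ^ 2 = 0) (h₂ : x₂ ^ 2 - 2 * x₃ ^ 2 + x₄ ^ 2 = 0)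
    (hs : x₁ + 3 * x₂ + 3 * x₃ + x₄ ≠ 0) :
    (6 * (x₁ - x₂ + x₃ - x₄) / (x₁ + 3 * x₂ + 3 * x₃ + x₄)) ^ 2 =
      (2 * (x₁ - 3 * x₂ - 3 * x₃ + x₄) / (x₁ + 3 * x₂ + 3 * x₃ + x₄)) ^ 3 +
        5 * (2 * (x₁ - 3 * x₂ - 3 * x₃ + x₄) / (x₁ + 3 * x₂ + 3 * x₃ + x₄)) ^ 2 +
        4 * (2 * (x₁ - 3 * x₂ - 3 * x₃ + x₄) / (x₁ + 3 * x₂ + 3 * x₃ + x₄)) := by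
  have key : (6 * (x₁ - x₂ + x₃ - x₄)) ^ 2 * (x₁ + 3 * x₂ + 3 * x₃ + x₄) =
      (2 * (x₁ - 3 * x₂ - 3 * x₃ + x₄)) ^ 3 +
        5 * (2 * (x₁ - 3 * x₂ - 3 * x₃ + x₄)) ^ 2 * (x₁ + 3 * x₂ + 3 * x₃ + x₄) +
        4 * (2 * (x₁ - 3 * x₂ - 3 * x₃ + x₄)) * (x₁ + 3 * x₂ + 3 * x₃ + x₄) ^ 2 := by
    linear_combination (144 * x₂ + 288 * x₃ - 144 * x₄) * h₁ +
      (-144 * x₁ + 288 * x₂ + 144 * x₃) * h₂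
  generalize hA : 6 * (x₁ - x₂ + x₃ - x₄) = A at key ⊢
  generalize hB : 2 * (x₁ - 3 * x₂ - 3 * x₃ + x₄) = B at key ⊢
  generalize hS : x₁ + 3 * x₂ + 3 * x₃ + x₄ = s at key hs ⊢
  field_simp
  linear_combination key
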